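/- Let n > 3 be an integer, b ∈ {2, −2}, and b̃ ∈ ℝ be such that T̃ₙ(b, b̃) is invertible, and set β = b̃ − b. Then the trace of T̃ₙ(b, b̃)⁻¹ equals n(n+2)/(3b) − 2βn / (3·(1 + 2β/b)) + βn / (3·(1 + 2β/b)·(n + 1 + (2β/b)·(n−1))). -/

import Mathlib

open Matrix BigOperators Finset

/-- The symmetric tridiagonal near-Toeplitz matrix with corner diagonal entries `bt`,
interior diagonal entries `b`, and off-diagonal entries `-1` (0-based indices). -/
noncomputable def Ttilde (n : ℕ) (b bt : ℝ) : Matrix (Fin n) (Fin n) ℝ :=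
  Matrix.of fun i j =>
    if (i : ℕ) = (j : ℕ) then (if (i : ℕ) = 0 ∨ (i : ℕ) = n - 1 then bt else b)
    else if (i : ℕ) + 1 = (j : ℕ) ∨ (j : ℕ) + 1 = (i : ℕ) then (-1 : ℝ) else 0

/-- The maximum absolute row sum (operator norm induced by the sup norm). -/
noncomputable def normInf {n : ℕ} (A : Matrix (Fin n) (Fin n) ℝ) : ℝ :=
  ⨆ i : Fin n, ∑ j : Fin n, |A i j|

lemma row_sum (n : ℕ) (b bt : ℝ) (f : ℕ → ℝ) (i : Fin n) :
    ∑ j : Fin n, Ttilde n b bt i j * f (j : ℕ) =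
      (if (i : ℕ) = 0 ∨ (i : ℕ) = n - 1 then bt else b) * f (i : ℕ)
        - (if (i : ℕ) + 1 < n then f ((i : ℕ) + 1) else 0)
        - (if (i : ℕ) ≠ 0 then f ((i : ℕ) - 1) else 0) := by
  have key : ∀ j : Fin n, Ttilde n b bt i j * f (j : ℕ) =
      ((if (j : ℕ) = (i : ℕ) then (if (i : ℕ) = 0 ∨ (i : ℕ) = n - 1 then bt else b) * f (i : ℕ) else 0)
        + (if (j : ℕ) = (i : ℕ) + 1 then -f ((i : ℕ) + 1) else 0))
        + (if (j : ℕ) = (i : ℕ) - 1 ∧ (i : ℕ) ≠ 0 then -f ((i : ℕ) - 1) else 0) := by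
    intro j
    simp only [Ttilde, Matrix.of_apply]
    rcases eq_or_ne ((j:ℕ)) ((i:ℕ)) with h | h
    · simp only [h, eq_self_iff_true, if_true]
      rw [if_neg (show ¬((i:ℕ) = (i:ℕ) + 1) by omega),
        if_neg (show ¬((i:ℕ) = (i:ℕ) - 1 ∧ (i:ℕ) ≠ 0) by omega)]
      ring
    · rw [if_neg (Ne.symm h), if_neg h]
      rcases eq_or_ne ((j:ℕ)) ((i:ℕ)+1) with h2 | h2
      · rw [if_pos (Or.inl h2.symm), if_pos h2,
          if_neg (show ¬((j:ℕ) = (i:ℕ) - 1 ∧ (i:ℕ) ≠ 0) by omega), h2]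
        ring
      · rcases eq_or_ne ((j:ℕ)+1) ((i:ℕ)) with h3 | h3
        · rw [if_pos (Or.inr h3), if_neg h2,
            if_pos (show (j:ℕ) = (i:ℕ) - 1 ∧ (i:ℕ) ≠ 0 by omega),
            show (i:ℕ) - 1 = (j:ℕ) by omega]
          ring
        · rw [if_neg (show ¬((i:ℕ)+1 = (j:ℕ) ∨ (j:ℕ)+1 = (i:ℕ)) by omega), if_neg h2,
            if_neg (show ¬((j:ℕ) = (i:ℕ) - 1 ∧ (i:ℕ) ≠ 0) by omega)]
          ring
  rw [Finset.sum_congr rfl (fun j _ => key j)]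
  rw [Finset.sum_add_distrib, Finset.sum_add_distrib]
  have e1 : ∀ (a : ℕ) (x : ℝ), (∑ j : Fin n, if (j : ℕ) = a then x else 0)
      = if a < n then x else 0 := by
    intro a x
    rw [Fin.sum_univ_eq_sum_range (fun k => if k = a then x else 0)]
    rw [Finset.sum_ite_eq' (Finset.range n) a (fun _ => x)]
    simp [Finset.mem_range]
  have e2 : (∑ j : Fin n, if (j : ℕ) = (i:ℕ) then (if (i : ℕ) = 0 ∨ (i : ℕ) = n - 1 then bt else b) * f (i : ℕ) else 0)
      = (if (i : ℕ) = 0 ∨ (i : ℕ) = n - 1 then bt else b) * f (i : ℕ) := by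
    rw [e1]; exact if_pos i.isLt
  have e3 : (∑ j : Fin n, if (j : ℕ) = (i:ℕ)+1 then -f ((i : ℕ) + 1) else 0)
      = -(if (i : ℕ) + 1 < n then f ((i : ℕ) + 1) else 0) := by
    rw [e1]; split_ifs <;> simp
  have e4 : (∑ j : Fin n, if (j : ℕ) = (i:ℕ)-1 ∧ (i : ℕ) ≠ 0 then -f ((i : ℕ) - 1) else 0)
      = -(if (i : ℕ) ≠ 0 then f ((i : ℕ) - 1) else 0) := by
    rcases eq_or_ne ((i:ℕ)) 0 with h | h
    · simp [h]
    · have : ∀ j : Fin n, (if (j : ℕ) = (i:ℕ)-1 ∧ (i : ℕ) ≠ 0 then -f ((i : ℕ) - 1) else 0)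
          = (if (j : ℕ) = (i:ℕ)-1 then -f ((i : ℕ) - 1) else 0) := by
        intro j; by_cases hj : (j:ℕ) = (i:ℕ)-1 <;> simp [hj, h]
      rw [Finset.sum_congr rfl (fun j _ => this j), e1, if_pos (by omega), if_pos h]
  rw [e2, e3, e4]; ring

/-- candidate inverse entries -/
noncomputable def mfun (n : ℕ) (bt : ℝ) (i j : ℕ) : ℝ :=
  (1 + ((min i j : ℕ) : ℝ) * (bt - 1)) * (1 + ((n : ℝ) - 1 - ((max i j : ℕ) : ℝ)) * (bt - 1)) /
    ((bt - 1) * (2 + ((n : ℝ) - 1) * (bt - 1)))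

lemma nz (n : ℕ) (hn : 3 < n) (bt : ℝ) (hinv : IsUnit (Ttilde n 2 bt)) :
    bt - 1 ≠ 0 ∧ 2 + ((n : ℝ) - 1) * (bt - 1) ≠ 0 := by
  rw [← mul_ne_zero_iff]
  intro hce
  set f : ℕ → ℝ := fun k => 1 + (k : ℝ) * (bt - 1) with hf
  have hAv : Ttilde n 2 bt *ᵥ (fun i : Fin n => f (i : ℕ)) = 0 := by
    funext i
    have h := row_sum n 2 bt f i
    rw [Matrix.mulVec, dotProduct]
    rw [h]
    simp only [Pi.zero_apply]
    have c1 : ((n - 1 : ℕ) : ℝ) = (n : ℝ) - 1 := by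
      rw [Nat.cast_sub (by omega)]; norm_num
    have c2 : ((n - 1 - 1 : ℕ) : ℝ) = (n : ℝ) - 2 := by
      rw [show n - 1 - 1 = n - 2 from by omega, Nat.cast_sub (by omega)]; norm_num
    rcases eq_or_ne ((i : ℕ)) 0 with h0 | h0
    · rw [if_pos (Or.inl h0), if_pos (by omega), if_neg (by omega), h0]
      simp only [hf]
      push_cast
      ring
    · rcases eq_or_ne ((i : ℕ)) (n - 1) with h1 | h1
      · rw [if_pos (Or.inr h1), if_neg (by omega), if_pos h0, h1]
        simp only [hf, c1, c2]
        linear_combination hce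
      · rw [if_neg (by omega), if_pos (by omega), if_pos h0]
        simp only [hf]
        rw [Nat.cast_sub (by omega : 1 ≤ (i : ℕ))]
        push_cast
        ring
  have hone : (Ttilde n 2 bt)⁻¹ * Ttilde n 2 bt = 1 :=
    Matrix.nonsing_inv_mul _ ((Matrix.isUnit_iff_isUnit_det _).mp hinv)
  have hv : (fun i : Fin n => f (i : ℕ)) = 0 := by
    have := congrArg (fun M => M *ᵥ (fun i : Fin n => f (i : ℕ))) hone
    simp only [← Matrix.mulVec_mulVec, hAv, Matrix.mulVec_zero, Matrix.one_mulVec] at this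
    exact this.symm
  have := congrFun hv ⟨0, by omega⟩
  simp [hf] at this

lemma mul_inv_eq (n : ℕ) (hn : 3 < n) (bt : ℝ) (hc : bt - 1 ≠ 0)
    (he : 2 + ((n : ℝ) - 1) * (bt - 1) ≠ 0) :
    Ttilde n 2 bt * Matrix.of (fun i j : Fin n => mfun n bt (i : ℕ) (j : ℕ)) = 1 := by
  ext i k
  rw [Matrix.mul_apply]
  have hrow : ∑ j : Fin n, Ttilde n 2 bt i j *
        Matrix.of (fun i j : Fin n => mfun n bt (i : ℕ) (j : ℕ)) j k
      = (if (i : ℕ) = 0 ∨ (i : ℕ) = n - 1 then bt else 2) * mfun n bt (i : ℕ) (k : ℕ)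
        - (if (i : ℕ) + 1 < n then mfun n bt ((i : ℕ) + 1) (k : ℕ) else 0)
        - (if (i : ℕ) ≠ 0 then mfun n bt ((i : ℕ) - 1) (k : ℕ) else 0) :=
    row_sum n 2 bt (fun m => mfun n bt m (k : ℕ)) i
  rw [hrow, Matrix.one_apply]
  have hkn : (k : ℕ) < n := k.isLt
  have hin : (i : ℕ) < n := i.isLt
  have c1 : ((n - 1 : ℕ) : ℝ) = (n : ℝ) - 1 := by rw [Nat.cast_sub (by omega)]; norm_num
  have c2 : ((n - 2 : ℕ) : ℝ) = (n : ℝ) - 2 := by rw [Nat.cast_sub (by omega)]; norm_num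
  rcases eq_or_ne ((i : ℕ)) 0 with h0 | h0
  · rw [if_pos (Or.inl h0), if_pos (by omega), if_neg (by omega), h0]
    rcases eq_or_ne ((k : ℕ)) 0 with hk | hk
    · rw [hk, if_pos (by simp only [Fin.ext_iff]; omega)]
      simp only [mfun]
      rw [show min 0 0 = 0 from by omega, show max 0 0 = 0 from by omega,
        show min (0 + 1) 0 = 0 from by omega, show max (0 + 1) 0 = 1 from by omega]
      push_cast
      field_simp
      have he' : 2 + (bt - 1) * ((n:ℝ) - 1) ≠ 0 := by rwa [mul_comm] at he
      field_simp
      ring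
    · rw [if_neg (by simp only [Fin.ext_iff]; omega)]
      simp only [mfun]
      rw [show min 0 (k : ℕ) = 0 from by omega, show max 0 (k : ℕ) = (k : ℕ) from by omega,
        show min (0 + 1) (k : ℕ) = 1 from by omega,
        show max (0 + 1) (k : ℕ) = (k : ℕ) from by omega]
      push_cast
      field_simp
      try ring
  · rcases eq_or_ne ((i : ℕ)) (n - 1) with h1 | h1
    · rw [if_pos (Or.inr h1), if_neg (by omega), if_pos h0, h1,
        show n - 1 - 1 = n - 2 from by omega]
      rcases eq_or_ne ((k : ℕ)) (n - 1) with hk | hk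
      · rw [hk, if_pos (by simp only [Fin.ext_iff]; omega)]
        simp only [mfun]
        rw [show min (n - 1) (n - 1) = n - 1 from by omega,
          show max (n - 1) (n - 1) = n - 1 from by omega,
          show min (n - 2) (n - 1) = n - 2 from by omega,
          show max (n - 2) (n - 1) = n - 1 from by omega, c1, c2]
        field_simp
        try ring
      · have hk2 : (k : ℕ) ≤ n - 2 := by omega
        rw [if_neg (by simp only [Fin.ext_iff]; omega)]
        simp only [mfun]
        rw [show min (n - 1) (k : ℕ) = (k : ℕ) from by omega,
          show max (n - 1) (k : ℕ) = n - 1 from by omega,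
          show min (n - 2) (k : ℕ) = (k : ℕ) from by omega,
          show max (n - 2) (k : ℕ) = n - 2 from by omega, c1, c2]
        field_simp
        try ring
    · rw [if_neg (by omega), if_pos (by omega), if_pos h0]
      rcases lt_trichotomy ((k : ℕ)) ((i : ℕ)) with hk | hk | hk
      · rw [if_neg (by simp only [Fin.ext_iff]; omega)]
        simp only [mfun]
        rw [show min (i : ℕ) (k : ℕ) = (k : ℕ) from by omega,
          show max (i : ℕ) (k : ℕ) = (i : ℕ) from by omega,
          show min ((i : ℕ) + 1) (k : ℕ) = (k : ℕ) from by omega,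
          show max ((i : ℕ) + 1) (k : ℕ) = (i : ℕ) + 1 from by omega,
          show min ((i : ℕ) - 1) (k : ℕ) = (k : ℕ) from by omega,
          show max ((i : ℕ) - 1) (k : ℕ) = (i : ℕ) - 1 from by omega,
          Nat.cast_sub (by omega : 1 ≤ (i : ℕ))]
        push_cast
        field_simp
        try ring
      · rw [if_pos (by simp only [Fin.ext_iff]; omega), ← hk]
        simp only [mfun]
        rw [show min (k : ℕ) (k : ℕ) = (k : ℕ) from by omega,
          show max (k : ℕ) (k : ℕ) = (k : ℕ) from by omega,
          show min ((k : ℕ) + 1) (k : ℕ) = (k : ℕ) from by omega,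
          show max ((k : ℕ) + 1) (k : ℕ) = (k : ℕ) + 1 from by omega,
          show min ((k : ℕ) - 1) (k : ℕ) = (k : ℕ) - 1 from by omega,
          show max ((k : ℕ) - 1) (k : ℕ) = (k : ℕ) from by omega,
          Nat.cast_sub (by omega : 1 ≤ (k : ℕ))]
        push_cast
        field_simp
        have he' : 2 + (bt - 1) * ((n:ℝ) - 1) ≠ 0 := by rwa [mul_comm] at he
        field_simp
        ring
      · rw [if_neg (by simp only [Fin.ext_iff]; omega)]
        simp only [mfun]
        rw [show min (i : ℕ) (k : ℕ) = (i : ℕ) from by omega,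
          show max (i : ℕ) (k : ℕ) = (k : ℕ) from by omega,
          show min ((i : ℕ) + 1) (k : ℕ) = (i : ℕ) + 1 from by omega,
          show max ((i : ℕ) + 1) (k : ℕ) = (k : ℕ) from by omega,
          show min ((i : ℕ) - 1) (k : ℕ) = (i : ℕ) - 1 from by omega,
          show max ((i : ℕ) - 1) (k : ℕ) = (k : ℕ) from by omega,
          Nat.cast_sub (by omega : 1 ≤ (i : ℕ))]
        push_cast
        field_simp
        try ring

lemma sum_id (n : ℕ) : ∑ i ∈ Finset.range n, (i : ℝ) = n * (n - 1) / 2 := by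
  induction n with
  | zero => simp
  | succ m ih => rw [Finset.sum_range_succ, ih]; push_cast; ring

lemma sum_sq (n : ℕ) : ∑ i ∈ Finset.range n, (i : ℝ) ^ 2 = n * (n - 1) * (2 * n - 1) / 6 := by
  induction n with
  | zero => simp
  | succ m ih => rw [Finset.sum_range_succ, ih]; push_cast; ring

lemma main2 (n : ℕ) (hn : 3 < n) (bt : ℝ) (hinv : IsUnit (Ttilde n 2 bt)) :
    Matrix.trace ((Ttilde n 2 bt)⁻¹) =
      ((n : ℝ) * (1 + ((n : ℝ) - 1) * (bt - 1)) + (bt - 1) ^ 2 *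
        (((n : ℝ) - 1) * ((n : ℝ) * ((n : ℝ) - 1) / 2)
          - (n : ℝ) * ((n : ℝ) - 1) * (2 * (n : ℝ) - 1) / 6))
        / ((bt - 1) * (2 + ((n : ℝ) - 1) * (bt - 1))) := by
  obtain ⟨hc, he⟩ := nz n hn bt hinv
  rw [Matrix.inv_eq_right_inv (mul_inv_eq n hn bt hc he)]
  rw [Matrix.trace]
  simp only [Matrix.diag_apply, Matrix.of_apply]
  rw [Fin.sum_univ_eq_sum_range (fun m => mfun n bt m m) n]
  have step : ∀ m ∈ Finset.range n, mfun n bt m m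
      = ((1 + ((n : ℝ) - 1) * (bt - 1)) + (bt - 1) ^ 2 *
          (((n : ℝ) - 1) * (m : ℝ) - (m : ℝ) ^ 2))
          / ((bt - 1) * (2 + ((n : ℝ) - 1) * (bt - 1))) := by
    intro m hm
    simp only [mfun, min_self, max_self]
    congr 1
    ring
  rw [Finset.sum_congr rfl step, ← Finset.sum_div]
  congr 1
  rw [Finset.sum_add_distrib, Finset.sum_const, Finset.card_range, nsmul_eq_mul,
    ← Finset.mul_sum, Finset.sum_sub_distrib, ← Finset.mul_sum, sum_id, sum_sq]

noncomputable def Dm (n : ℕ) : Matrix (Fin n) (Fin n) ℝ :=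
  Matrix.diagonal fun i => (-1 : ℝ) ^ (i : ℕ)

lemma Dm_mul_Dm (n : ℕ) : Dm n * Dm n = 1 := by
  rw [Dm, Matrix.diagonal_mul_diagonal]
  have : ∀ i : Fin n, ((-1 : ℝ)) ^ (i : ℕ) * (-1) ^ (i : ℕ) = 1 := fun i => by
    rw [← pow_add]; exact Even.neg_one_pow ⟨(i : ℕ), rfl⟩
  rw [show (fun i : Fin n => ((-1 : ℝ)) ^ (i : ℕ) * (-1) ^ (i : ℕ)) = fun _ => 1 from
    funext fun i => this i]
  exact Matrix.diagonal_one

lemma conj (n : ℕ) (bt : ℝ) :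
    Ttilde n (-2) bt = -(Dm n * Ttilde n 2 (-bt) * Dm n) := by
  ext i j
  simp only [Matrix.neg_apply, Dm, Matrix.mul_diagonal, Matrix.diagonal_mul, Ttilde,
    Matrix.of_apply]
  rcases eq_or_ne ((i : ℕ)) ((j : ℕ)) with h | h
  · have key : ((-1 : ℝ)) ^ (i : ℕ) * (-1) ^ (j : ℕ) = 1 := by
      rw [h, ← pow_add]; exact Even.neg_one_pow ⟨(j : ℕ), rfl⟩
    rw [if_pos h, if_pos h]
    split_ifs with hcor
    · linear_combination (-bt) * key
    · linear_combination 2 * key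
  · rw [if_neg h, if_neg h]
    split_ifs with hadj
    · have key : ((-1 : ℝ)) ^ (i : ℕ) * (-1) ^ (j : ℕ) = -1 := by
        rw [← pow_add]
        apply Odd.neg_one_pow
        rcases hadj with h2 | h2
        · exact ⟨(i : ℕ), by omega⟩
        · exact ⟨(j : ℕ), by omega⟩
      linear_combination (-1) * key
    · ring

lemma conj2 (n : ℕ) (bt : ℝ) :
    Ttilde n 2 (-bt) = -(Dm n * Ttilde n (-2) bt * Dm n) := by
  have hDD := Dm_mul_Dm n
  have sandwich : Dm n * (Dm n * Ttilde n 2 (-bt) * Dm n) * Dm n = Ttilde n 2 (-bt) := by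
    simp only [← Matrix.mul_assoc]
    rw [hDD, one_mul, Matrix.mul_assoc, hDD, mul_one]
  rw [conj n bt, Matrix.mul_neg, Matrix.neg_mul, neg_neg, sandwich]

theorem stmt4 (n : ℕ) (hn : 3 < n) (b bt : ℝ) (hb : b = 2 ∨ b = -2)
    (hinv : IsUnit (Ttilde n b bt)) :
    Matrix.trace ((Ttilde n b bt)⁻¹) =
      (n : ℝ) * ((n : ℝ) + 2) / (3 * b)
        - 2 * (bt - b) * (n : ℝ) / (3 * (1 + 2 * (bt - b) / b))
        + (bt - b) * (n : ℝ) /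
            (3 * (1 + 2 * (bt - b) / b) *
              ((n : ℝ) + 1 + (2 * (bt - b) / b) * ((n : ℝ) - 1))) := by
  rcases hb with hb | hb <;> subst hb
  · obtain ⟨hc, he⟩ := nz n hn bt hinv
    rw [main2 n hn bt hinv]
    rw [show (1 + 2 * (bt - 2) / 2 : ℝ) = bt - 1 from by ring,
      show ((n : ℝ) + 1 + 2 * (bt - 2) / 2 * ((n : ℝ) - 1)) = 2 + ((n : ℝ) - 1) * (bt - 1)
        from by ring]
    field_simp
    ring
  · have hDD := Dm_mul_Dm n
    have hDu : IsUnit (Dm n) := ⟨⟨Dm n, Dm n, hDD, hDD⟩, rfl⟩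
    have hA2 : IsUnit (Ttilde n 2 (-bt)) := by
      rw [conj2 n bt]
      exact ((hDu.mul hinv).mul hDu).neg
    obtain ⟨hc, he⟩ := nz n hn (-bt) hA2
    have hB1 : Ttilde n 2 (-bt) * (Ttilde n 2 (-bt))⁻¹ = 1 :=
      Matrix.mul_nonsing_inv _ ((Matrix.isUnit_iff_isUnit_det _).mp hA2)
    have hinv' : (Ttilde n (-2) bt)⁻¹ = -(Dm n * (Ttilde n 2 (-bt))⁻¹ * Dm n) := by
      apply Matrix.inv_eq_right_inv
      rw [conj n bt]
      calc -(Dm n * Ttilde n 2 (-bt) * Dm n) * -(Dm n * (Ttilde n 2 (-bt))⁻¹ * Dm n)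
          = Dm n * Ttilde n 2 (-bt) * ((Dm n * Dm n) * ((Ttilde n 2 (-bt))⁻¹ * Dm n)) := by
            rw [neg_mul_neg]; simp only [Matrix.mul_assoc]
        _ = Dm n * Ttilde n 2 (-bt) * ((Ttilde n 2 (-bt))⁻¹ * Dm n) := by rw [hDD, one_mul]
        _ = Dm n * (Ttilde n 2 (-bt) * (Ttilde n 2 (-bt))⁻¹) * Dm n := by
            simp only [Matrix.mul_assoc]
        _ = 1 := by rw [hB1, Matrix.mul_one, hDD]
    rw [hinv', Matrix.trace_neg, Matrix.trace_mul_comm (Dm n * (Ttilde n 2 (-bt))⁻¹) (Dm n),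
      ← Matrix.mul_assoc, hDD, one_mul]
    rw [main2 n hn (-bt) hA2]
    rw [show (1 + 2 * (bt - -2) / -2 : ℝ) = -bt - 1 from by ring,
      show ((n : ℝ) + 1 + 2 * (bt - -2) / -2 * ((n : ℝ) - 1)) = 2 + ((n : ℝ) - 1) * (-bt - 1)
        from by ring]
    field_simp
    ring
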